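/- Let ≡_B be a bisimulation relation on a finite MDP. Then for any deterministic policy π that is B-invariant (i.e., π(sᵢ) = π(sⱼ) whenever sᵢ ≡_B sⱼ), bisimilar states have equal values: sᵢ ≡_B sⱼ implies V^π(sᵢ) = V^π(sⱼ). -/

import Mathlib

open Finset Classical
noncomputable section
open scoped Classical

/-- Bisimilar states of a finite MDP have equal value under any `B`-invariant
deterministic policy. -/
theorem bisimulation_policy_value_eq {S A : Type*} [Fintype S] [Fintype A]
    (r : S → A → ℝ) (P : S → A → S → ℝ) (γ : ℝ)
    (hγ : 0 ≤ γ) (hγ1 : γ < 1)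
    (hP : ∀ s a, (∀ s', 0 ≤ P s a s') ∧ ∑ s', P s a s' = 1)
    (B : S → S → Prop) (hB : Equivalence B)
    (hBr : ∀ si sj, B si sj → ∀ a, r si a = r sj a)
    (hBP : ∀ si sj, B si sj → ∀ a (t : S),
      ∑ s' ∈ univ.filter (fun s' => B t s'), P si a s' =
      ∑ s' ∈ univ.filter (fun s' => B t s'), P sj a s')
    (π : S → A) (hπ : ∀ si sj, B si sj → π si = π sj)
    (Vπ : S → ℝ)
    (hV : ∀ s, Vπ s = r s (π s) + γ * ∑ s', P s (π s) s' * Vπ s') :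
    ∀ si sj, B si sj → Vπ si = Vπ sj := by
  classical
  set C : S → Finset S := fun s => univ.filter (fun s' => B s s') with hC
  have hmemC : ∀ s, s ∈ C s := fun s => by simp [hC, hB.refl s]
  have hmemC_iff : ∀ s t, t ∈ C s ↔ B s t := fun s t => by simp [hC]
  have hCeq : ∀ {x y}, B x y → C x = C y := by
    intro x y h
    ext z
    simp only [hC, mem_filter, mem_univ, true_and]
    exact ⟨fun hz => hB.trans (hB.symm h) hz, fun hz => hB.trans h hz⟩
  -- key lemma: B-invariant functions have equal expectations under bisimilar states
  have key : ∀ (f : S → ℝ), (∀ x y, B x y → f x = f y) →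
      ∀ si sj, B si sj → ∀ a,
        ∑ s', P si a s' * f s' = ∑ s', P sj a s' * f s' := by
    intro f hf si sj hij a
    have expand : ∀ s0, ∑ s', P s0 a s' * f s' =
        ∑ t, (f t / (C t).card) * ∑ s' ∈ C t, P s0 a s' := by
      intro s0
      have step1 : ∀ t, (f t / (C t).card) * ∑ s' ∈ C t, P s0 a s' =
          ∑ s', if B t s' then (f t / (C t).card) * P s0 a s' else 0 := by
        intro t
        rw [Finset.mul_sum, hC]
        exact Finset.sum_filter _ _
      simp_rw [step1]
      rw [Finset.sum_comm]
      apply Finset.sum_congr rfl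
      intro s' _
      have inner : ∑ t, (if B t s' then (f t / (C t).card) * P s0 a s' else 0) =
          (∑ t ∈ C s', f t / (C t).card) * P s0 a s' := by
        rw [Finset.sum_mul, hC, Finset.sum_filter]
        apply Finset.sum_congr rfl
        intro t _
        by_cases h : B t s'
        · simp [h, hB.symm h]
        · have h' : ¬ B s' t := fun hh => h (hB.symm hh)
          simp [h, h']
      rw [inner]
      have hconst : ∀ t ∈ C s', f t / (C t).card = f s' / (C s').card := by
        intro t ht
        rw [hmemC_iff] at ht
        rw [hf t s' (hB.symm ht), hCeq (hB.symm ht)]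
      rw [Finset.sum_congr rfl hconst, Finset.sum_const, nsmul_eq_mul]
      have hcard : ((C s').card : ℝ) ≠ 0 := by
        have : 0 < (C s').card := Finset.card_pos.mpr ⟨s', hmemC s'⟩
        exact_mod_cast this.ne'
      field_simp
    rw [expand si, expand sj]
    apply Finset.sum_congr rfl
    intro t _
    rw [hC, hBP si sj hij a t]
  -- the pairs finset and max gap d
  intro si sj hij
  set pairs : Finset (S × S) := (univ ×ˢ univ).filter (fun p => B p.1 p.2) with hpairs
  have hne : pairs.Nonempty := ⟨(si, sj), by simp [hpairs, hij]⟩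
  set d : ℝ := pairs.sup' hne (fun p => Vπ p.1 - Vπ p.2) with hd
  have hdle : ∀ x y, B x y → Vπ x - Vπ y ≤ d := by
    intro x y h
    have hmem : (x, y) ∈ pairs :=
      Finset.mem_filter.mpr ⟨Finset.mem_product.mpr ⟨mem_univ x, mem_univ y⟩, h⟩
    exact Finset.le_sup' (fun p => Vπ p.1 - Vπ p.2) hmem
  have hd0 : 0 ≤ d := by
    have := hdle si si (hB.refl si)
    linarith
  -- class-wise minimum W
  set W : S → ℝ := fun s => (C s).inf' ⟨s, hmemC s⟩ Vπ with hW
  have hWinv : ∀ x y, B x y → W x = W y := by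
    intro x y h
    apply le_antisymm
    · apply Finset.le_inf'
      intro b hb
      exact Finset.inf'_le _ (by rw [hCeq h]; exact hb)
    · apply Finset.le_inf'
      intro b hb
      exact Finset.inf'_le _ (by rw [← hCeq h]; exact hb)
  have hWle : ∀ s, W s ≤ Vπ s := fun s => Finset.inf'_le _ (hmemC s)
  have hVWd : ∀ s, Vπ s - W s ≤ d := by
    intro s
    obtain ⟨t, ht, hWt⟩ := Finset.exists_mem_eq_inf' ⟨s, hmemC s⟩ Vπ
    rw [hmemC_iff] at ht
    have hWs : W s = Vπ t := hWt
    rw [hWs]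
    exact hdle s t ht
  -- main contraction bound at the maximizing pair
  obtain ⟨p, hp, hpd⟩ := Finset.exists_mem_eq_sup' hne (fun p => Vπ p.1 - Vπ p.2)
  have hpB : B p.1 p.2 := by
    rw [hpairs] at hp
    exact (Finset.mem_filter.mp hp).2
  have hπeq : π p.1 = π p.2 := hπ _ _ hpB
  have hreq : r p.1 (π p.1) = r p.2 (π p.2) := by
    rw [hπeq]; exact hBr _ _ hpB (π p.2)
  set a := π p.1 with ha
  have hsumW : ∑ s', P p.1 a s' * W s' = ∑ s', P p.2 a s' * W s' :=
    key W hWinv _ _ hpB a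
  have hb1 : ∑ s', P p.1 a s' * (Vπ s' - W s') ≤ d := by
    calc ∑ s', P p.1 a s' * (Vπ s' - W s')
        ≤ ∑ s', P p.1 a s' * d := by
          apply Finset.sum_le_sum
          intro s' _
          exact mul_le_mul_of_nonneg_left (hVWd s') ((hP p.1 a).1 s')
      _ = d := by rw [← Finset.sum_mul, (hP p.1 a).2, one_mul]
  have hb2 : 0 ≤ ∑ s', P p.2 a s' * (Vπ s' - W s') := by
    apply Finset.sum_nonneg
    intro s' _
    exact mul_nonneg ((hP p.2 a).1 s') (by linarith [hWle s'])
  have hdiff : ∑ s', P p.1 a s' * Vπ s' - ∑ s', P p.2 a s' * Vπ s' ≤ d := by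
    have e1 : ∑ s', P p.1 a s' * Vπ s' =
        ∑ s', P p.1 a s' * (Vπ s' - W s') + ∑ s', P p.1 a s' * W s' := by
      rw [← Finset.sum_add_distrib]; apply Finset.sum_congr rfl; intros; ring
    have e2 : ∑ s', P p.2 a s' * Vπ s' =
        ∑ s', P p.2 a s' * (Vπ s' - W s') + ∑ s', P p.2 a s' * W s' := by
      rw [← Finset.sum_add_distrib]; apply Finset.sum_congr rfl; intros; ring
    rw [e1, e2, hsumW]
    linarith
  have hdeq : d = Vπ p.1 - Vπ p.2 := hpd
  have hdγ : d ≤ γ * d := by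
    have hV1 := hV p.1
    have hV2 := hV p.2
    rw [← ha] at hV1
    rw [← hπeq] at hV2 hreq
    calc d = Vπ p.1 - Vπ p.2 := hdeq
      _ = γ * (∑ s', P p.1 a s' * Vπ s' - ∑ s', P p.2 a s' * Vπ s') := by
          rw [hV1, hV2, hreq]; ring
      _ ≤ γ * d := mul_le_mul_of_nonneg_left hdiff hγ
  have hdz : d = 0 := by nlinarith
  have h1 := hdle si sj hij
  have h2 := hdle sj si (hB.symm hij)
  rw [hdz] at h1 h2
  linarith
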